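/- Let A be a real n×n matrix each of whose row sums equals r, and let ε be any real number. Then the matrix S = A + ε·J_n has every row sum equal to r + ε, and its characteristic polynomial satisfies charpoly(S)·(t − r) = charpoly(A)·(t − (r + ε)); that is, the eigenvalue multiset of S is obtained from that of A by replacing one occurrence of the eigenvalue r by r + ε. Moreover, if in addition every column sum of A equals r, then every column sum of S equals r + ε. -/

import Mathlib

open Polynomial Matrix

/-- The matrix `J_n`: every entry equal to `1/n`. -/
noncomputable def Jmat (n : ℕ) : Matrix (Fin n) (Fin n) ℝ :=
  Matrix.of fun _ _ => (1 : ℝ) / n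

private lemma charpoly_aux (n : ℕ) (hn : 0 < n) (r ε : ℝ) (A : Matrix (Fin n) (Fin n) ℝ)
    (hrow : ∀ i, ∑ j, A i j = r) :
    (A + ε • Jmat n).charpoly * (X - C r) = A.charpoly * (X - C (r + ε)) := by
  have hn' : (n : ℝ) ≠ 0 := Nat.cast_ne_zero.mpr hn.ne'
  set K := FractionRing ℝ[X]
  set φ := algebraMap ℝ[X] K with hφdef
  have hφ : Function.Injective φ := IsFractionRing.injective _ _
  set S := A + ε • Jmat n with hS
  set N : Matrix (Fin n) (Fin n) K := (charmatrix A).map φ with hN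
  set w : K := φ (X - C r) with hw
  have hwne : w ≠ 0 := by
    rw [hw, ← map_zero φ]
    intro h
    exact (X_sub_C_ne_zero r) (hφ h)
  have hdetN : N.det = φ A.charpoly := (RingHom.map_det φ _).symm
  have hdetne : N.det ≠ 0 := by
    rw [hdetN, ← map_zero φ]
    intro h
    exact A.charpoly_monic.ne_zero (hφ h)
  have hU : IsUnit N.det := isUnit_iff_ne_zero.mpr hdetne
  have hN1 : ∀ i, ∑ j, N i j = w := by
    intro i
    rw [hw]
    have e0 : ∑ j, N i j = φ (∑ j, charmatrix A i j) := by rw [map_sum]; rfl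
    rw [e0]
    congr 1
    have e1 : ∀ j, charmatrix A i j = (if i = j then (X : ℝ[X]) else 0) - C (A i j) := by
      intro j
      by_cases h : i = j
      · subst h; simp [charmatrix_apply_eq]
      · simp [charmatrix_apply_ne _ _ _ h, h]
    rw [Finset.sum_congr rfl fun j _ => e1 j, Finset.sum_sub_distrib]
    simp [← map_sum, hrow i]
  have h1 : N *ᵥ (fun _ => (1 : K)) = fun _ => w := by
    funext i
    simp [Matrix.mulVec, dotProduct, hN1 i]
  have h2 : N⁻¹ *ᵥ (fun _ => (1 : K)) = fun _ => w⁻¹ := by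
    have e1 : N⁻¹ *ᵥ (N *ᵥ (fun _ => (1:K))) = fun _ => (1:K) := by
      rw [Matrix.mulVec_mulVec, Matrix.nonsing_inv_mul _ hU, Matrix.one_mulVec]
    rw [h1] at e1
    have e2 : (fun _ : Fin n => w) = w • (fun _ : Fin n => (1:K)) := by
      funext i; simp
    rw [e2, Matrix.mulVec_smul] at e1
    funext i
    have := congrFun e1 i
    simp only [Pi.smul_apply, smul_eq_mul] at this
    rw [mul_comm] at this
    exact eq_inv_of_mul_eq_one_left this
  have hinvsum : ∀ i, ∑ j, N⁻¹ i j = w⁻¹ := by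
    intro i
    have := congrFun h2 i
    simpa [Matrix.mulVec, dotProduct] using this
  set u : Fin n → K := fun _ => -φ (C (ε / n)) with hu
  set v : Fin n → K := fun _ => (1 : K) with hv
  have hNs : (charmatrix S).map φ = N + replicateCol Unit u * replicateRow Unit v := by
    ext i j
    have hSij : S i j = A i j + ε / n := by
      show A i j + (ε • Jmat n) i j = _
      have : (ε • Jmat n) i j = ε * (1 / n) := rfl
      rw [this]; ring
    simp only [Matrix.map_apply, Matrix.add_apply, Matrix.mul_apply, Finset.univ_unique,
      Finset.sum_singleton, Matrix.replicateCol_apply, Matrix.replicateRow_apply, hN, hu, hv, mul_one]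
    by_cases h : i = j
    · subst h
      rw [charmatrix_apply_eq, charmatrix_apply_eq, hSij, C_add, map_sub, map_sub, map_add]
      ring
    · rw [charmatrix_apply_ne _ _ _ h, charmatrix_apply_ne _ _ _ h, hSij, C_add, map_neg,
        map_neg, map_add]
      ring
  have hdetS : φ S.charpoly = φ A.charpoly * (1 - (n : K) * φ (C (ε / n)) * w⁻¹) := by
    have hml := Matrix.det_add_replicateCol_mul_replicateRow (ι := Unit) hU u v
    rw [← hNs] at hml
    have hd : ((charmatrix S).map φ).det = φ S.charpoly := (RingHom.map_det φ _).symm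
    rw [hd, hdetN] at hml
    rw [hml]
    congr 1
    rw [Matrix.det_unique]
    simp only [Matrix.add_apply, Matrix.one_apply_eq]
    have hentry : (replicateRow Unit v * N⁻¹ * replicateCol Unit u) default default
        = -(↑n * φ (C (ε / n)) * w⁻¹) := by
      have e : ∀ x, (replicateRow Unit v * N⁻¹) default x = ∑ j, N⁻¹ j x := by
        intro x; simp [Matrix.mul_apply, hv]
      have : (replicateRow Unit v * N⁻¹ * replicateCol Unit u) default default
          = ∑ x, (replicateRow Unit v * N⁻¹) default x * u x := by
        simp [Matrix.mul_apply]
      rw [this]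
      calc ∑ x, (replicateRow Unit v * N⁻¹) default x * u x
          = ∑ x, (∑ j, N⁻¹ j x) * (-φ (C (ε / n))) := by
            exact Finset.sum_congr rfl fun x _ => by rw [e x]
        _ = (∑ x : Fin n, ∑ j, N⁻¹ j x) * (-φ (C (ε/n))) := by rw [Finset.sum_mul]
        _ = (∑ j : Fin n, ∑ x, N⁻¹ j x) * (-φ (C (ε/n))) := by rw [Finset.sum_comm]
        _ = ((n : K) * w⁻¹) * (-φ (C (ε/n))) := by
              rw [Finset.sum_congr rfl fun j _ => hinvsum j]
              simp [Finset.sum_const, nsmul_eq_mul]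
        _ = -(↑n * φ (C (ε / n)) * w⁻¹) := by ring
    rw [hentry]
    ring
  have hc : (n : K) * φ (C (ε / n)) = φ (C ε) := by
    have e1 : ((n : ℕ) : K) = φ ((n : ℕ) : ℝ[X]) := by rw [map_natCast]
    rw [e1, ← _root_.map_mul]
    congr 1
    have e2 : ((n : ℕ) : ℝ[X]) = C ((n : ℕ) : ℝ) := by simp
    rw [e2, ← C_mul]
    congr 1
    field_simp
  have key : (1 - (n : K) * φ (C (ε / n)) * w⁻¹) * w = w - φ (C ε) := by
    rw [sub_mul, one_mul, mul_assoc, inv_mul_cancel₀ hwne, mul_one, hc]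
  have hCε : φ ((X : ℝ[X]) - C (r + ε)) = w - φ (C ε) := by
    have : (X : ℝ[X]) - C (r + ε) = (X - C r) - C ε := by rw [C_add]; ring
    rw [this, map_sub]
  apply hφ
  rw [_root_.map_mul, _root_.map_mul, hCε, hdetS, mul_assoc, key]

/-- Let `A` be a real `n × n` matrix (`n ≥ 1`) whose row sums all equal `r`, and let `ε`
be real.  Then `S = A + ε·J_n` has every row sum equal to `r + ε`, its characteristic
polynomial satisfies `charpoly S * (t - r) = charpoly A * (t - (r + ε))`, and if moreover
every column sum of `A` equals `r`, then every column sum of `S` equals `r + ε`. -/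
theorem stmt5 (n : ℕ) (hn : 0 < n) (r ε : ℝ) (A : Matrix (Fin n) (Fin n) ℝ)
    (hrow : ∀ i, ∑ j, A i j = r) :
    (∀ i, ∑ j, (A + ε • Jmat n) i j = r + ε) ∧
    (A + ε • Jmat n).charpoly * (X - C r) = A.charpoly * (X - C (r + ε)) ∧
    ((∀ j, ∑ i, A i j = r) → ∀ j, ∑ i, (A + ε • Jmat n) i j = r + ε) := by
  have hn' : (n : ℝ) ≠ 0 := Nat.cast_ne_zero.mpr hn.ne'
  have hJ : ∀ (i j : Fin n), (ε • Jmat n) i j = ε / n := by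
    intro i j
    show ε * ((1 : ℝ) / n) = ε / n
    ring
  have hconst : ∑ _j : Fin n, ε / n = ε := by
    rw [Finset.sum_const, Finset.card_univ, Fintype.card_fin, nsmul_eq_mul]
    field_simp
  refine ⟨?_, charpoly_aux n hn r ε A hrow, ?_⟩
  · intro i
    calc ∑ j, (A + ε • Jmat n) i j = ∑ j, (A i j + ε / n) := by
          exact Finset.sum_congr rfl fun j _ => by rw [Matrix.add_apply, hJ]
      _ = r + ε := by rw [Finset.sum_add_distrib, hrow i, hconst]
  · intro hcol j
    calc ∑ i, (A + ε • Jmat n) i j = ∑ i, (A i j + ε / n) := by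
          exact Finset.sum_congr rfl fun i _ => by rw [Matrix.add_apply, hJ]
      _ = r + ε := by rw [Finset.sum_add_distrib, hcol j, hconst]
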